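/- There is no Cartesian bi-magic design on the (1,1,r)-board when r ≡ 1 (mod 4). Precisely: if r ≡ 1 (mod 4), there is no bijection f from the 2r+1 squares (one square PQ, rows PR and QR of length r) to [1, 2r+1] such that the multiset {c₁, c₂, c₃} takes exactly 2 distinct values, where c₁ = f(PQ)+Σf(PR), c₂ = f(PQ)+Σf(QR), and c₃ is the common value of all column sums f(PR)ₖ + f(QR)ₖ (1 ≤ k ≤ r) (required to be constant across columns). -/

import Mathlib

/-- Sum of parities `(i+1) % 2` over `range n`. -/
lemma sum_succ_mod_two_range (n : ℕ) :
    ∑ i ∈ Finset.range n, (i + 1) % 2 = (n + 1) / 2 := by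
  induction n with
  | zero => simp
  | succ n ih => rw [Finset.sum_range_succ, ih]; omega

/-- Lower bound for the (doubled) sum of distinct naturals, each at least `2`. -/
lemma two_mul_sum_lb_aux {t : ℕ} (g : Fin (t + 1) → ℕ) (hg : Function.Injective g)
    (h2 : ∀ k, 2 ≤ g k) : (t + 1) * (t + 4) ≤ 2 * ∑ k, g k := by
  classical
  have hcard : (Finset.image g Finset.univ).card = t + 1 := by
    rw [Finset.card_image_of_injective _ hg, Finset.card_univ, Fintype.card_fin]
  set T := Finset.image g Finset.univ with hT
  set f : Fin (t + 1) ↪o ℕ := T.orderEmbOfFin hcard with hf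
  have hmem : ∀ i, f i ∈ T := fun i => Finset.orderEmbOfFin_mem T hcard i
  have h2' : ∀ i, 2 ≤ f i := by
    intro i
    obtain ⟨k, -, hk⟩ := Finset.mem_image.mp (hmem i)
    have := h2 k
    omega
  have key : ∀ i : Fin (t + 1), i.val + 2 ≤ f i := by
    intro i
    induction i using Fin.induction with
    | zero => simpa using h2' 0
    | succ j ih =>
      have h1 : f j.castSucc < f j.succ := f.strictMono Fin.castSucc_lt_succ
      have h2'' : (j.castSucc : ℕ) = (j : ℕ) := rfl
      have h3 : ((j.succ : Fin (t + 1)) : ℕ) = (j : ℕ) + 1 := rfl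
      omega
  have h1 : ∑ x ∈ T, x = ∑ k, g k := by
    rw [hT, Finset.sum_image (fun a _ b _ h => hg h)]
  have hTf : Finset.image (fun i => f i) Finset.univ = T := by
    apply Finset.coe_injective
    rw [Finset.coe_image, Finset.coe_univ, Set.image_univ]
    exact Finset.range_orderEmbOfFin T hcard
  have h2'' : ∑ x ∈ T, x = ∑ i, f i := by
    rw [← hTf, Finset.sum_image (fun a _ b _ h => f.injective h)]
  have h3 : ∑ i : Fin (t + 1), ((i : ℕ) + 2) ≤ ∑ i, f i :=
    Finset.sum_le_sum fun i _ => key i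
  have h4 : ∑ i : Fin (t + 1), ((i : ℕ) + 2)
      = (∑ i ∈ Finset.range (t + 1), i) + 2 * (t + 1) := by
    rw [Fin.sum_univ_eq_sum_range (fun i => i + 2), Finset.sum_add_distrib,
      Finset.sum_const, Finset.card_range, smul_eq_mul]
    ring
  have hG : (∑ i ∈ Finset.range (t + 1), i) * 2 = (t + 1) * t := by
    rw [Finset.sum_range_id_mul_two]
    simp
  have hring : (t + 1) * (t + 4) = (t + 1) * t + 4 * (t + 1) := by ring
  linarith

lemma two_mul_sum_lb {r : ℕ} (g : Fin r → ℕ) (hg : Function.Injective g)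
    (h2 : ∀ k, 2 ≤ g k) : r * (r + 3) ≤ 2 * ∑ k, g k := by
  rcases r with - | t
  · simp
  · have := two_mul_sum_lb_aux g hg h2
    have hring : (t + 1) * (t + 1 + 3) = (t + 1) * (t + 4) := by ring
    omega

set_option maxHeartbeats 800000 in
/-- No Cartesian bi-magic design on the `(1,1,r)`-board when `r ≡ 1 (mod 4)`. -/
theorem stmt6 (r : ℕ) (hr : 0 < r) (hmod : r % 4 = 1) :
    ¬ ∃ (e : (Unit ⊕ Fin r ⊕ Fin r) ≃ Fin (2 * r + 1)) (c₁ c₂ c₃ : ℕ),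
      c₁ = ((e (Sum.inl ())).val + 1) + ∑ k, ((e (Sum.inr (Sum.inl k))).val + 1) ∧
      c₂ = ((e (Sum.inl ())).val + 1) + ∑ k, ((e (Sum.inr (Sum.inr k))).val + 1) ∧
      (∀ k : Fin r,
        ((e (Sum.inr (Sum.inl k))).val + 1) + ((e (Sum.inr (Sum.inr k))).val + 1) = c₃) ∧
      ({c₁, c₂, c₃} : Finset ℕ).card = 2 := by
  rintro ⟨e, c₁, c₂, c₃, hc₁, hc₂, hcol, hcard⟩
  obtain ⟨m, hm⟩ : ∃ m, r = 4 * m + 1 := ⟨r / 4, by omega⟩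
  set g : Fin r → ℕ := fun k => ((e (Sum.inr (Sum.inl k))).val + 1) with hgdef
  set h : Fin r → ℕ := fun k => ((e (Sum.inr (Sum.inr k))).val + 1) with hhdef
  set a : ℕ := (e (Sum.inl ())).val + 1 with hadef
  set S₁ : ℕ := ∑ k, g k with hS₁def
  set S₂ : ℕ := ∑ k, h k with hS₂def
  have hcol' : ∀ k, g k + h k = c₃ := fun k => hcol k
  -- basic bounds
  have hab : 1 ≤ a ∧ a ≤ 2 * r + 1 := ⟨by omega, by have := (e (Sum.inl ())).isLt; omega⟩
  have hgb : ∀ k, 1 ≤ g k ∧ g k ≤ 2 * r + 1 := fun k => by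
    have := (e (Sum.inr (Sum.inl k))).isLt; simp only [hgdef]; omega
  have hhb : ∀ k, 1 ≤ h k ∧ h k ≤ 2 * r + 1 := fun k => by
    have := (e (Sum.inr (Sum.inr k))).isLt; simp only [hhdef]; omega
  have hS₁lb : r ≤ S₁ := by
    calc r = ∑ _k : Fin r, 1 := by simp
    _ ≤ S₁ := Finset.sum_le_sum fun k _ => (hgb k).1
  have hS₂lb : r ≤ S₂ := by
    calc r = ∑ _k : Fin r, 1 := by simp
    _ ≤ S₂ := Finset.sum_le_sum fun k _ => (hhb k).1
  have hS₁ub : S₁ ≤ r * (2 * r + 1) := by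
    calc S₁ ≤ ∑ _k : Fin r, (2 * r + 1) := Finset.sum_le_sum fun k _ => (hgb k).2
    _ = r * (2 * r + 1) := by simp [Finset.sum_const, mul_comm]
  have hS₂ub : S₂ ≤ r * (2 * r + 1) := by
    calc S₂ ≤ ∑ _k : Fin r, (2 * r + 1) := Finset.sum_le_sum fun k _ => (hhb k).2
    _ = r * (2 * r + 1) := by simp [Finset.sum_const, mul_comm]
  -- total sum
  have hsplit : a + (S₁ + S₂) = ∑ i : Fin (2 * r + 1), ((i : ℕ) + 1) := by
    rw [← Equiv.sum_comp e (fun i : Fin (2 * r + 1) => (i : ℕ) + 1)]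
    rw [Fintype.sum_sum_type, Fintype.sum_sum_type]
    simp [hadef, hS₁def, hS₂def, hgdef, hhdef]
  have hgauss : (∑ i : Fin (2 * r + 1), ((i : ℕ) + 1)) * 2 = (2 * r + 2) * (2 * r + 1) := by
    rw [Fin.sum_univ_eq_sum_range (fun i => i + 1)]
    have h0 : ∑ x ∈ Finset.range (2 * r + 2), x
        = (∑ x ∈ Finset.range (2 * r + 1), (x + 1)) + 0 :=
      Finset.sum_range_succ' (fun i => i) (2 * r + 1)
    have h1 : (∑ i ∈ Finset.range (2 * r + 2), i) * 2 = (2 * r + 2) * (2 * r + 1) := by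
      have h2 := Finset.sum_range_id_mul_two (2 * r + 2)
      simpa using h2
    omega
  have htot2 : 2 * (a + S₁ + S₂) = (2 * r + 2) * (2 * r + 1) := by omega
  -- column sums
  have hF2 : S₁ + S₂ = r * c₃ := by
    have h5 : ∑ k : Fin r, (g k + h k) = ∑ _k : Fin r, c₃ :=
      Finset.sum_congr rfl fun k _ => hcol' k
    rw [Finset.sum_add_distrib] at h5
    rw [hS₁def, hS₂def]
    rw [h5, Finset.sum_const]
    simp [mul_comm]
  -- c₃ is one of three values
  have hring1 : (2 * r + 2) * (2 * r + 1) = 2 * (r * (2 * r + 3)) + 2 := by ring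
  have hring2 : (2 * r + 2) * (2 * r + 1) = 2 * (r * (2 * r + 1)) + 2 * (2 * r + 1) := by
    ring
  have hub : r * c₃ ≤ r * (2 * r + 3) := by omega
  have hlb : r * (2 * r + 1) ≤ r * c₃ := by omega
  have hc₃ub : c₃ ≤ 2 * r + 3 := Nat.le_of_mul_le_mul_left hub hr
  have hc₃lb : 2 * r + 1 ≤ c₃ := Nat.le_of_mul_le_mul_left hlb hr
  -- disjunction from the cardinality condition
  have hdisj : c₁ = c₂ ∨ c₁ = c₃ ∨ c₂ = c₃ := by
    by_contra hne
    push_neg at hne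
    obtain ⟨h12, h13, h23⟩ := hne
    rw [Finset.card_insert_of_notMem (by simp [h12, h13]),
      Finset.card_insert_of_notMem (by simp [h23]), Finset.card_singleton] at hcard
    omega
  obtain ⟨s, hs⟩ : ∃ s, m * m = s := ⟨_, rfl⟩
  have hmles : m ≤ s := by
    rcases Nat.eq_zero_or_pos m with h0 | h0
    · omega
    · calc m = m * 1 := (mul_one m).symm
      _ ≤ m * m := Nat.mul_le_mul_left m h0
      _ = s := hs
  have hTT : (2 * r + 2) * (2 * r + 1) = 64 * s + 56 * m + 12 := by
    rw [hm, ← hs]; ring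
  have hSub : r * (2 * r + 1) = 32 * s + 20 * m + 3 := by rw [hm, ← hs]; ring
  obtain hc3 | hc3 | hc3 : c₃ = 2 * r + 1 ∨ c₃ = 2 * r + 2 ∨ c₃ = 2 * r + 3 := by omega
  · -- c₃ = 2r+1, a = 2r+1
    have hSS : S₁ + S₂ = 32 * s + 20 * m + 3 := by rw [hF2, hc3, hm, ← hs]; ring
    have ha' : a = 2 * r + 1 := by omega
    rcases hdisj with h12 | h13 | h23
    · omega
    · omega
    · omega
  · -- c₃ = 2r+2, a = r+1; parity of S₁, S₂ is odd
    have hSS : S₁ + S₂ = 32 * s + 24 * m + 4 := by rw [hF2, hc3, hm, ← hs]; ring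
    have ha' : a = r + 1 := by omega
    -- odd-label counting
    have hparval : ∑ i : Fin (2 * r + 1), ((i : ℕ) + 1) % 2 = r + 1 := by
      rw [Fin.sum_univ_eq_sum_range (fun i => (i + 1) % 2), sum_succ_mod_two_range]
      omega
    have hraw₁ : (∑ k : Fin r, ((e (Sum.inr (Sum.inl k))).val + 1) % 2)
        = ∑ k, g k % 2 := rfl
    have hraw₂ : (∑ k : Fin r, ((e (Sum.inr (Sum.inr k))).val + 1) % 2)
        = ∑ k, h k % 2 := rfl
    have hpar : a % 2 + ((∑ k, g k % 2) + (∑ k, h k % 2)) = r + 1 := by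
      have htot := Equiv.sum_comp e (fun i : Fin (2 * r + 1) => ((i : ℕ) + 1) % 2)
      rw [Fintype.sum_sum_type, Fintype.sum_sum_type, Fintype.sum_unique,
        hparval, hraw₁, hraw₂] at htot
      exact htot
    have hQeq : (∑ k, g k % 2) = ∑ k, h k % 2 :=
      Finset.sum_congr rfl fun k _ => by have := hcol' k; omega
    have hS₁mod : S₁ % 2 = (∑ k, g k % 2) % 2 := by
      rw [hS₁def]; exact Finset.sum_nat_mod _ _ _
    have hS₂mod : S₂ % 2 = (∑ k, h k % 2) % 2 := by
      rw [hS₂def]; exact Finset.sum_nat_mod _ _ _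
    rcases hdisj with h12 | h13 | h23
    · omega
    · omega
    · omega
  · -- c₃ = 2r+3, a = 1
    have hSS : S₁ + S₂ = 32 * s + 28 * m + 5 := by rw [hF2, hc3, hm, ← hs]; ring
    have ha' : a = 1 := by omega
    have hzero : (e (Sum.inl ())).val = 0 := by omega
    have hg2 : ∀ k, 2 ≤ g k := by
      intro k
      rcases Nat.lt_or_ge 1 (g k) with hlt | hle
      · omega
      · exfalso
        have hval : (e (Sum.inr (Sum.inl k))).val = (e (Sum.inl ())).val := by
          have := (hgb k).1; simp only [hgdef] at hle ⊢; omega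
        have := e.injective (Fin.val_injective hval)
        simp at this
    have hh2 : ∀ k, 2 ≤ h k := by
      intro k
      rcases Nat.lt_or_ge 1 (h k) with hlt | hle
      · omega
      · exfalso
        have hval : (e (Sum.inr (Sum.inr k))).val = (e (Sum.inl ())).val := by
          have := (hhb k).1; simp only [hhdef] at hle ⊢; omega
        have := e.injective (Fin.val_injective hval)
        simp at this
    have hginj : Function.Injective g := by
      intro k k' hkk'
      simp only [hgdef] at hkk'
      have := e.injective (Fin.val_injective (by omega : (e (Sum.inr (Sum.inl k))).val
        = (e (Sum.inr (Sum.inl k'))).val))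
      simpa using this
    have hhinj : Function.Injective h := by
      intro k k' hkk'
      simp only [hhdef] at hkk'
      have := e.injective (Fin.val_injective (by omega : (e (Sum.inr (Sum.inr k))).val
        = (e (Sum.inr (Sum.inr k'))).val))
      simpa using this
    have hlb₁ : r * (r + 3) ≤ 2 * S₁ := by
      rw [hS₁def]; exact two_mul_sum_lb g hginj hg2
    have hlb₂ : r * (r + 3) ≤ 2 * S₂ := by
      rw [hS₂def]; exact two_mul_sum_lb h hhinj hh2
    have hrr : r * (r + 3) = 16 * s + 20 * m + 4 := by rw [hm, ← hs]; ring
    have hms : (m = 0 ∧ s = 0) ∨ (1 ≤ m ∧ m ≤ s) := by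
      rcases Nat.eq_zero_or_pos m with h0 | h0
      · left; omega
      · right; omega
    rcases hdisj with h12 | h13 | h23
    · omega
    · omega
    · omega
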